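/- arXiv:2406.07425 — 2 statements merged into one kernel-verified Lean document; each statement's English description precedes it below -/
import Mathlib

section
/- Let v : ℝ × ℝ → ℝ be a smooth function of (x,t) with v_xx(x,t) ≠ 0 for all (x,t), satisfying the evolution equation v_t = −v_x⁴/v_xx. Define η : ℝ × ℝ → ℝ by η = v_x⁶ v_xxx / v_xx³ − 3 v_x⁵ / v_xx. Then η satisfies the linearized equation ∂η/∂t = ( −4 v_x³/v_xx )·∂η/∂x + ( v_x⁴/v_xx² )·∂²η/∂x² at every point (x,t). -/
/-- Partial derivative with respect to the first (space) variable. -/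
noncomputable def pdx (f : ℝ × ℝ → ℝ) : ℝ × ℝ → ℝ :=
  fun p => deriv (fun x => f (x, p.2)) p.1

/-- Partial derivative with respect to the second (time) variable. -/
noncomputable def pdt (f : ℝ × ℝ → ℝ) : ℝ × ℝ → ℝ :=
  fun p => deriv (fun t => f (p.1, t)) p.2



lemma one_le_top' : (1 : WithTop ℕ∞) ≤ ((⊤ : ℕ∞) : WithTop ℕ∞) := by
  exact_mod_cast le_top
lemma top_add_one_le' : ((⊤ : ℕ∞) : WithTop ℕ∞) + 1 ≤ ((⊤ : ℕ∞) : WithTop ℕ∞) := by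
  exact_mod_cast le_top

lemma hasDerivAt_sliceX {f : ℝ × ℝ → ℝ} (hf : ContDiff ℝ (⊤ : ℕ∞) f) (p : ℝ × ℝ) :
    HasDerivAt (fun x => f (x, p.2)) (pdx f p) p.1 := by
  have h : DifferentiableAt ℝ (fun x => f (x, p.2)) p.1 :=
    (hf.differentiable (by simp) (p.1, p.2)).comp p.1
      (differentiableAt_id.prodMk (differentiableAt_const _))
  exact h.hasDerivAt

lemma hasDerivAt_sliceT {f : ℝ × ℝ → ℝ} (hf : ContDiff ℝ (⊤ : ℕ∞) f) (p : ℝ × ℝ) :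
    HasDerivAt (fun t => f (p.1, t)) (pdt f p) p.2 := by
  have h : DifferentiableAt ℝ (fun t => f (p.1, t)) p.2 :=
    (hf.differentiable (by simp) (p.1, p.2)).comp p.2
      ((differentiableAt_const _).prodMk differentiableAt_id)
  exact h.hasDerivAt

lemma pdx_eq_fderiv {f : ℝ × ℝ → ℝ} (hf : ContDiff ℝ (⊤ : ℕ∞) f) (p : ℝ × ℝ) :
    pdx f p = fderiv ℝ f p (1, 0) := by
  have h1 : HasDerivAt (fun x : ℝ => ((x, p.2) : ℝ × ℝ)) (1, 0) p.1 :=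
    (hasDerivAt_id p.1).prodMk (hasDerivAt_const p.1 p.2)
  have h2 : HasFDerivAt f (fderiv ℝ f p) (p.1, p.2) :=
    (hf.differentiable (by simp) (p.1, p.2)).hasFDerivAt
  exact (h2.comp_hasDerivAt p.1 h1).deriv

lemma pdt_eq_fderiv {f : ℝ × ℝ → ℝ} (hf : ContDiff ℝ (⊤ : ℕ∞) f) (p : ℝ × ℝ) :
    pdt f p = fderiv ℝ f p (0, 1) := by
  have h1 : HasDerivAt (fun t : ℝ => ((p.1, t) : ℝ × ℝ)) (0, 1) p.2 :=
    (hasDerivAt_const p.2 p.1).prodMk (hasDerivAt_id p.2)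
  have h2 : HasFDerivAt f (fderiv ℝ f p) (p.1, p.2) :=
    (hf.differentiable (by simp) (p.1, p.2)).hasFDerivAt
  exact (h2.comp_hasDerivAt p.2 h1).deriv

lemma contDiff_pdx {f : ℝ × ℝ → ℝ} (hf : ContDiff ℝ (⊤ : ℕ∞) f) :
    ContDiff ℝ (⊤ : ℕ∞) (pdx f) := by
  have h : ContDiff ℝ (⊤ : ℕ∞) (fun p : ℝ × ℝ => fderiv ℝ f p (1, 0)) :=
    (hf.fderiv_right top_add_one_le').clm_apply contDiff_const
  have e : pdx f = fun p : ℝ × ℝ => fderiv ℝ f p (1, 0) :=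
    funext fun p => pdx_eq_fderiv hf p
  rw [e]; exact h

lemma pdt_pdx_comm {f : ℝ × ℝ → ℝ} (hf : ContDiff ℝ (⊤ : ℕ∞) f) (p : ℝ × ℝ) :
    pdt (pdx f) p = pdx (pdt f) p := by
  have hd : Differentiable ℝ f := hf.differentiable (by simp)
  have hf' : ContDiff ℝ (⊤ : ℕ∞) (fderiv ℝ f) := hf.fderiv_right top_add_one_le'
  have hd' : Differentiable ℝ (fderiv ℝ f) := hf'.differentiable (by simp)
  have hsymm := second_derivative_symmetric (fun y => (hd y).hasFDerivAt)
    (hd' p).hasFDerivAt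
  have hx : HasDerivAt (fun x : ℝ => ((x, p.2) : ℝ × ℝ)) (1, 0) p.1 :=
    (hasDerivAt_id p.1).prodMk (hasDerivAt_const p.1 p.2)
  have ht : HasDerivAt (fun t : ℝ => ((p.1, t) : ℝ × ℝ)) (0, 1) p.2 :=
    (hasDerivAt_const p.2 p.1).prodMk (hasDerivAt_id p.2)
  have h1 : pdt (pdx f) p = fderiv ℝ (fderiv ℝ f) p (0, 1) (1, 0) := by
    have e : (fun t => pdx f (p.1, t)) = fun t => fderiv ℝ f (p.1, t) (1, 0) :=
      funext fun t => pdx_eq_fderiv hf (p.1, t)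
    have hc : HasDerivAt (fun t => fderiv ℝ f (p.1, t))
        (fderiv ℝ (fderiv ℝ f) p (0, 1)) p.2 :=
      (hd' (p.1, p.2)).hasFDerivAt.comp_hasDerivAt p.2 ht
    have h := hc.clm_apply (hasDerivAt_const p.2 ((1 : ℝ), (0 : ℝ)))
    show deriv (fun t => pdx f (p.1, t)) p.2 = _
    rw [e]
    simpa using h.deriv
  have h2 : pdx (pdt f) p = fderiv ℝ (fderiv ℝ f) p (1, 0) (0, 1) := by
    have e : (fun x => pdt f (x, p.2)) = fun x => fderiv ℝ f (x, p.2) (0, 1) :=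
      funext fun x => pdt_eq_fderiv hf (x, p.2)
    have hc : HasDerivAt (fun x => fderiv ℝ f (x, p.2))
        (fderiv ℝ (fderiv ℝ f) p (1, 0)) p.1 :=
      (hd' (p.1, p.2)).hasFDerivAt.comp_hasDerivAt p.1 hx
    have h := hc.clm_apply (hasDerivAt_const p.1 ((0 : ℝ), (1 : ℝ)))
    show deriv (fun x => pdt f (x, p.2)) p.1 = _
    rw [e]
    simpa using h.deriv
  rw [h1, h2, hsymm]

/-- Subcase 1.2: for a solution of `v_t = −v_x⁴/v_xx`, the function
`η = v_x⁶ v_xxx / v_xx³ − 3 v_x⁵ / v_xx` satisfies the linearized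
(Lie–Bäcklund symmetry) equation. -/
theorem subcase12_third_order_symmetry
    (v : ℝ × ℝ → ℝ) (hv : ContDiff ℝ (⊤ : ℕ∞) v)
    (hvxx : ∀ p : ℝ × ℝ, pdx (pdx v) p ≠ 0)
    (heq : ∀ p : ℝ × ℝ, pdt v p = -(pdx v p) ^ 4 / pdx (pdx v) p)
    (η : ℝ × ℝ → ℝ)
    (hη : η = fun p =>
      (pdx v p) ^ 6 * pdx (pdx (pdx v)) p / (pdx (pdx v) p) ^ 3
        - 3 * (pdx v p) ^ 5 / pdx (pdx v) p) :
    ∀ p : ℝ × ℝ, pdt η p =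
      (-4 * (pdx v p) ^ 3 / pdx (pdx v) p) * pdx η p
      + ((pdx v p) ^ 4 / (pdx (pdx v) p) ^ 2) * pdx (pdx η) p := by
  subst hη
  have h1 : ContDiff ℝ (⊤ : ℕ∞) (pdx v) := contDiff_pdx hv
  have h2 : ContDiff ℝ (⊤ : ℕ∞) (pdx (pdx v)) := contDiff_pdx h1
  have h3 : ContDiff ℝ (⊤ : ℕ∞) (pdx (pdx (pdx v))) := contDiff_pdx h2
  have h4 : ContDiff ℝ (⊤ : ℕ∞) (pdx (pdx (pdx (pdx v)))) := contDiff_pdx h3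
  have hG : pdt v = fun q => -(pdx v q) ^ 4 / pdx (pdx v) q := funext heq
  -- first time-derivative:  v₁ₜ = (a⁴c − 4a³b²)/b²
  have hg1 : pdt (pdx v) = fun q =>
      ((pdx v q) ^ 4 * pdx (pdx (pdx v)) q
        - 4 * (pdx v q) ^ 3 * (pdx (pdx v) q) ^ 2) / (pdx (pdx v) q) ^ 2 := by
    funext q
    rw [pdt_pdx_comm hv q, hG]
    have HA := hasDerivAt_sliceX h1 q
    have HB := hasDerivAt_sliceX h2 q
    exact (((HA.pow 4).neg.div HB (hvxx q)).congr_deriv (by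
      have hb := hvxx q
      simp only [Prod.mk.eta, Pi.pow_apply, Pi.neg_apply, Pi.sub_apply, Pi.add_apply, Pi.mul_apply, Pi.div_apply]
      field_simp
      ring)).deriv
  -- v₂ₜ = (a⁴bd + 4a³b²c − 12a²b⁴ − 2a⁴c²)/b³
  have hg2 : pdt (pdx (pdx v)) = fun q =>
      ((pdx v q) ^ 4 * pdx (pdx v) q * pdx (pdx (pdx (pdx v))) q
        + 4 * (pdx v q) ^ 3 * (pdx (pdx v) q) ^ 2 * pdx (pdx (pdx v)) q
        - 12 * (pdx v q) ^ 2 * (pdx (pdx v) q) ^ 4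
        - 2 * (pdx v q) ^ 4 * (pdx (pdx (pdx v)) q) ^ 2) / (pdx (pdx v) q) ^ 3 := by
    funext q
    rw [pdt_pdx_comm h1 q, hg1]
    have HA := hasDerivAt_sliceX h1 q
    have HB := hasDerivAt_sliceX h2 q
    have HC := hasDerivAt_sliceX h3 q
    exact (((((HA.pow 4).mul HC).sub
        (((HA.pow 3).const_mul (4 : ℝ)).mul (HB.pow 2))).div (HB.pow 2)
        (pow_ne_zero 2 (hvxx q))).congr_deriv (by
      have hb := hvxx q
      simp only [Prod.mk.eta, Pi.pow_apply, Pi.neg_apply, Pi.sub_apply, Pi.add_apply, Pi.mul_apply, Pi.div_apply]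
      field_simp
      ring)).deriv
  -- v₃ₜ = (8a³b³d − 6a⁴bcd + a⁴b²e − 24ab⁶ − 12a³b²c² + 6a⁴c³)/b⁴
  have hg3 : pdt (pdx (pdx (pdx v))) = fun q =>
      (8 * (pdx v q) ^ 3 * (pdx (pdx v) q) ^ 3 * pdx (pdx (pdx (pdx v))) q
        - 6 * (pdx v q) ^ 4 * pdx (pdx v) q * pdx (pdx (pdx v)) q * pdx (pdx (pdx (pdx v))) q
        + (pdx v q) ^ 4 * (pdx (pdx v) q) ^ 2 * pdx (pdx (pdx (pdx (pdx v)))) q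
        - 24 * pdx v q * (pdx (pdx v) q) ^ 6
        - 12 * (pdx v q) ^ 3 * (pdx (pdx v) q) ^ 2 * (pdx (pdx (pdx v)) q) ^ 2
        + 6 * (pdx v q) ^ 4 * (pdx (pdx (pdx v)) q) ^ 3) / (pdx (pdx v) q) ^ 4 := by
    funext q
    rw [pdt_pdx_comm h2 q, hg2]
    have HA := hasDerivAt_sliceX h1 q
    have HB := hasDerivAt_sliceX h2 q
    have HC := hasDerivAt_sliceX h3 q
    have HD := hasDerivAt_sliceX h4 q
    exact ((((((((HA.pow 4).mul HB).mul HD).add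
        ((((HA.pow 3).const_mul (4 : ℝ)).mul (HB.pow 2)).mul HC)).sub
        (((HA.pow 2).const_mul (12 : ℝ)).mul (HB.pow 4))).sub
        (((HA.pow 4).const_mul (2 : ℝ)).mul (HC.pow 2))).div (HB.pow 3)
        (pow_ne_zero 3 (hvxx q))).congr_deriv (by
      have hb := hvxx q
      simp only [Prod.mk.eta, Pi.pow_apply, Pi.neg_apply, Pi.sub_apply, Pi.add_apply, Pi.mul_apply, Pi.div_apply]
      field_simp
      ring)).deriv
  -- ηₓ = (9a⁵b²c + a⁶bd − 3a⁶c² − 15a⁴b⁴)/b⁴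
  have hE1 : pdx (fun p => (pdx v p) ^ 6 * pdx (pdx (pdx v)) p / (pdx (pdx v) p) ^ 3
        - 3 * (pdx v p) ^ 5 / pdx (pdx v) p) = fun q =>
      (9 * (pdx v q) ^ 5 * (pdx (pdx v) q) ^ 2 * pdx (pdx (pdx v)) q
        + (pdx v q) ^ 6 * pdx (pdx v) q * pdx (pdx (pdx (pdx v))) q
        - 3 * (pdx v q) ^ 6 * (pdx (pdx (pdx v)) q) ^ 2
        - 15 * (pdx v q) ^ 4 * (pdx (pdx v) q) ^ 4) / (pdx (pdx v) q) ^ 4 := by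
    funext q
    have HA := hasDerivAt_sliceX h1 q
    have HB := hasDerivAt_sliceX h2 q
    have HC := hasDerivAt_sliceX h3 q
    exact (((((HA.pow 6).mul HC).div (HB.pow 3) (pow_ne_zero 3 (hvxx q))).sub
        (((HA.pow 5).const_mul (3 : ℝ)).div HB (hvxx q))).congr_deriv (by
      have hb := hvxx q
      simp only [Prod.mk.eta, Pi.pow_apply, Pi.neg_apply, Pi.sub_apply, Pi.add_apply, Pi.mul_apply, Pi.div_apply]
      field_simp
      ring)).deriv
  -- ηₓₓ = (45a⁴b⁴c + 15a⁵b³d − 9a⁶bcd + a⁶b²e − 60a³b⁶ − 36a⁵b²c² + 12a⁶c³)/b⁵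
  have hE2 : ∀ q : ℝ × ℝ, pdx (fun q =>
      (9 * (pdx v q) ^ 5 * (pdx (pdx v) q) ^ 2 * pdx (pdx (pdx v)) q
        + (pdx v q) ^ 6 * pdx (pdx v) q * pdx (pdx (pdx (pdx v))) q
        - 3 * (pdx v q) ^ 6 * (pdx (pdx (pdx v)) q) ^ 2
        - 15 * (pdx v q) ^ 4 * (pdx (pdx v) q) ^ 4) / (pdx (pdx v) q) ^ 4) q =
      (45 * (pdx v q) ^ 4 * (pdx (pdx v) q) ^ 4 * pdx (pdx (pdx v)) q
        + 15 * (pdx v q) ^ 5 * (pdx (pdx v) q) ^ 3 * pdx (pdx (pdx (pdx v))) q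
        - 9 * (pdx v q) ^ 6 * pdx (pdx v) q * pdx (pdx (pdx v)) q * pdx (pdx (pdx (pdx v))) q
        + (pdx v q) ^ 6 * (pdx (pdx v) q) ^ 2 * pdx (pdx (pdx (pdx (pdx v)))) q
        - 60 * (pdx v q) ^ 3 * (pdx (pdx v) q) ^ 6
        - 36 * (pdx v q) ^ 5 * (pdx (pdx v) q) ^ 2 * (pdx (pdx (pdx v)) q) ^ 2
        + 12 * (pdx v q) ^ 6 * (pdx (pdx (pdx v)) q) ^ 3) / (pdx (pdx v) q) ^ 5 := by
    intro q
    have HA := hasDerivAt_sliceX h1 q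
    have HB := hasDerivAt_sliceX h2 q
    have HC := hasDerivAt_sliceX h3 q
    have HD := hasDerivAt_sliceX h4 q
    exact (((((((((HA.pow 5).const_mul (9 : ℝ)).mul (HB.pow 2)).mul HC).add
        (((HA.pow 6).mul HB).mul HD)).sub
        (((HA.pow 6).const_mul (3 : ℝ)).mul (HC.pow 2))).sub
        (((HA.pow 4).const_mul (15 : ℝ)).mul (HB.pow 4))).div (HB.pow 4)
        (pow_ne_zero 4 (hvxx q))).congr_deriv (by
      have hb := hvxx q
      simp only [Prod.mk.eta, Pi.pow_apply, Pi.neg_apply, Pi.sub_apply, Pi.add_apply, Pi.mul_apply, Pi.div_apply]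
      field_simp
      ring)).deriv
  intro p
  have hb := hvxx p
  have hx1 : pdx (fun p => (pdx v p) ^ 6 * pdx (pdx (pdx v)) p / (pdx (pdx v) p) ^ 3
        - 3 * (pdx v p) ^ 5 / pdx (pdx v) p) p =
      (9 * (pdx v p) ^ 5 * (pdx (pdx v) p) ^ 2 * pdx (pdx (pdx v)) p
        + (pdx v p) ^ 6 * pdx (pdx v) p * pdx (pdx (pdx (pdx v))) p
        - 3 * (pdx v p) ^ 6 * (pdx (pdx (pdx v)) p) ^ 2
        - 15 * (pdx v p) ^ 4 * (pdx (pdx v) p) ^ 4) / (pdx (pdx v) p) ^ 4 :=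
    congrFun hE1 p
  have hx2 : pdx (pdx (fun p => (pdx v p) ^ 6 * pdx (pdx (pdx v)) p / (pdx (pdx v) p) ^ 3
        - 3 * (pdx v p) ^ 5 / pdx (pdx v) p)) p =
      (45 * (pdx v p) ^ 4 * (pdx (pdx v) p) ^ 4 * pdx (pdx (pdx v)) p
        + 15 * (pdx v p) ^ 5 * (pdx (pdx v) p) ^ 3 * pdx (pdx (pdx (pdx v))) p
        - 9 * (pdx v p) ^ 6 * pdx (pdx v) p * pdx (pdx (pdx v)) p * pdx (pdx (pdx (pdx v))) p
        + (pdx v p) ^ 6 * (pdx (pdx v) p) ^ 2 * pdx (pdx (pdx (pdx (pdx v)))) p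
        - 60 * (pdx v p) ^ 3 * (pdx (pdx v) p) ^ 6
        - 36 * (pdx v p) ^ 5 * (pdx (pdx v) p) ^ 2 * (pdx (pdx (pdx v)) p) ^ 2
        + 12 * (pdx v p) ^ 6 * (pdx (pdx (pdx v)) p) ^ 3) / (pdx (pdx v) p) ^ 5 := by
    rw [hE1]; exact hE2 p
  have HT1 : HasDerivAt (fun t => pdx v (p.1, t))
      (((pdx v p) ^ 4 * pdx (pdx (pdx v)) p
        - 4 * (pdx v p) ^ 3 * (pdx (pdx v) p) ^ 2) / (pdx (pdx v) p) ^ 2) p.2 := by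
    simpa only [hg1] using hasDerivAt_sliceT h1 p
  have HT2 : HasDerivAt (fun t => pdx (pdx v) (p.1, t))
      (((pdx v p) ^ 4 * pdx (pdx v) p * pdx (pdx (pdx (pdx v))) p
        + 4 * (pdx v p) ^ 3 * (pdx (pdx v) p) ^ 2 * pdx (pdx (pdx v)) p
        - 12 * (pdx v p) ^ 2 * (pdx (pdx v) p) ^ 4
        - 2 * (pdx v p) ^ 4 * (pdx (pdx (pdx v)) p) ^ 2) / (pdx (pdx v) p) ^ 3) p.2 := by
    simpa only [hg2] using hasDerivAt_sliceT h2 p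
  have HT3 : HasDerivAt (fun t => pdx (pdx (pdx v)) (p.1, t))
      ((8 * (pdx v p) ^ 3 * (pdx (pdx v) p) ^ 3 * pdx (pdx (pdx (pdx v))) p
        - 6 * (pdx v p) ^ 4 * pdx (pdx v) p * pdx (pdx (pdx v)) p * pdx (pdx (pdx (pdx v))) p
        + (pdx v p) ^ 4 * (pdx (pdx v) p) ^ 2 * pdx (pdx (pdx (pdx (pdx v)))) p
        - 24 * pdx v p * (pdx (pdx v) p) ^ 6
        - 12 * (pdx v p) ^ 3 * (pdx (pdx v) p) ^ 2 * (pdx (pdx (pdx v)) p) ^ 2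
        + 6 * (pdx v p) ^ 4 * (pdx (pdx (pdx v)) p) ^ 3) / (pdx (pdx v) p) ^ 4) p.2 := by
    simpa only [hg3] using hasDerivAt_sliceT h3 p
  rw [hx1, hx2]
  exact (((((HT1.pow 6).mul HT3).div (HT2.pow 3) (pow_ne_zero 3 (hvxx p))).sub
      (((HT1.pow 5).const_mul (3 : ℝ)).div HT2 (hvxx p))).congr_deriv (by
    simp only [Prod.mk.eta, Pi.pow_apply, Pi.neg_apply, Pi.sub_apply, Pi.add_apply, Pi.mul_apply, Pi.div_apply]
    field_simp
    ring)).deriv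
end

section
/- Let u : ℝ × ℝ → ℝ be a smooth function of (x,t) with u_xxx(x,t) ≠ 0 for all (x,t), satisfying the evolution equation u_t = 1/u_xxx². Define p : ℝ × ℝ → ℝ by p = −2^{−1/3}·u_xx. Then p_x(x,t) ≠ 0 for all (x,t), and p satisfies ∂p/∂t = ∂/∂x ( p_xx/p_x³ ) at every point (x,t), i.e. the potential variable v with v_x = p solves v_t = v_xxx/v_xx³. -/
lemma hasDerivAt_sliceX_s15 {f : ℝ × ℝ → ℝ} (hf : ContDiff ℝ (⊤ : ℕ∞) f) (q : ℝ × ℝ) :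
    HasDerivAt (fun x => f (x, q.2)) (fderiv ℝ f q ((1 : ℝ), (0 : ℝ))) q.1 := by
  have h1 : HasFDerivAt f (fderiv ℝ f q) (q.1, q.2) := by
    simpa using ((hf.differentiable (by simp)) q).hasFDerivAt
  have h2 : HasDerivAt (fun x : ℝ => (x, q.2)) ((1 : ℝ), (0 : ℝ)) q.1 :=
    (hasDerivAt_id q.1).prodMk (hasDerivAt_const q.1 q.2)
  exact h1.comp_hasDerivAt q.1 h2

lemma hasDerivAt_sliceT_s15 {f : ℝ × ℝ → ℝ} (hf : ContDiff ℝ (⊤ : ℕ∞) f) (q : ℝ × ℝ) :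
    HasDerivAt (fun t => f (q.1, t)) (fderiv ℝ f q ((0 : ℝ), (1 : ℝ))) q.2 := by
  have h1 : HasFDerivAt f (fderiv ℝ f q) (q.1, q.2) := by
    simpa using ((hf.differentiable (by simp)) q).hasFDerivAt
  have h2 : HasDerivAt (fun t : ℝ => (q.1, t)) ((0 : ℝ), (1 : ℝ)) q.2 :=
    (hasDerivAt_const q.2 q.1).prodMk (hasDerivAt_id q.2)
  exact h1.comp_hasDerivAt q.2 h2

lemma pdx_eq {f : ℝ × ℝ → ℝ} (hf : ContDiff ℝ (⊤ : ℕ∞) f) (q : ℝ × ℝ) :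
    pdx f q = fderiv ℝ f q ((1 : ℝ), (0 : ℝ)) := (hasDerivAt_sliceX_s15 hf q).deriv

lemma pdt_eq {f : ℝ × ℝ → ℝ} (hf : ContDiff ℝ (⊤ : ℕ∞) f) (q : ℝ × ℝ) :
    pdt f q = fderiv ℝ f q ((0 : ℝ), (1 : ℝ)) := (hasDerivAt_sliceT_s15 hf q).deriv

lemma contDiff_pdt {f : ℝ × ℝ → ℝ} (hf : ContDiff ℝ (⊤ : ℕ∞) f) :
    ContDiff ℝ (⊤ : ℕ∞) (pdt f) := by
  have : pdt f = fun q => fderiv ℝ f q ((0 : ℝ), (1 : ℝ)) := funext (pdt_eq hf)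
  rw [this]
  exact (hf.fderiv_right (mod_cast le_top)).clm_apply contDiff_const

lemma fderiv_apply_const {f : ℝ × ℝ → ℝ} (hf : ContDiff ℝ (⊤ : ℕ∞) f)
    (v w : ℝ × ℝ) (q : ℝ × ℝ) :
    fderiv ℝ (fun q' => fderiv ℝ f q' v) q w = fderiv ℝ (fderiv ℝ f) q w v := by
  have h2 : ContDiff ℝ (⊤ : ℕ∞) (fderiv ℝ f) := hf.fderiv_right (mod_cast le_top)
  have hdf : DifferentiableAt ℝ (fderiv ℝ f) q :=
    (h2.differentiable (by simp)) q
  rw [fderiv_clm_apply hdf (differentiableAt_const v)]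
  simp

lemma pdx_pdt_comm {f : ℝ × ℝ → ℝ} (hf : ContDiff ℝ (⊤ : ℕ∞) f) (q : ℝ × ℝ) :
    pdx (pdt f) q = pdt (pdx f) q := by
  have hpt := contDiff_pdt hf
  have hpx := contDiff_pdx hf
  rw [pdx_eq hpt q, pdt_eq hpx q]
  have e1 : (pdt f) = fun q' => fderiv ℝ f q' ((0 : ℝ), (1 : ℝ)) := funext (pdt_eq hf)
  have e2 : (pdx f) = fun q' => fderiv ℝ f q' ((1 : ℝ), (0 : ℝ)) := funext (pdx_eq hf)
  rw [e1, e2, fderiv_apply_const hf _ _ q, fderiv_apply_const hf _ _ q]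
  exact (hf.contDiffAt.isSymmSndFDerivAt (by rw [minSmoothness_of_isRCLikeNormedField]; exact_mod_cast ENat.natCast_le_of_coe_top_le_withTop le_rfl 2)) _ _

lemma sliceX_contDiff {f : ℝ × ℝ → ℝ} (hf : ContDiff ℝ (⊤ : ℕ∞) f) (t : ℝ) :
    ContDiff ℝ (⊤ : ℕ∞) (fun x => f (x, t)) :=
  hf.comp (contDiff_id.prodMk contDiff_const)

lemma sliceT_contDiff {f : ℝ × ℝ → ℝ} (hf : ContDiff ℝ (⊤ : ℕ∞) f) (x : ℝ) :
    ContDiff ℝ (⊤ : ℕ∞) (fun t => f (x, t)) :=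
  hf.comp (contDiff_const.prodMk contDiff_id)

lemma hasDerivAt_pdx {f : ℝ × ℝ → ℝ} (hf : ContDiff ℝ (⊤ : ℕ∞) f) (q : ℝ × ℝ) :
    HasDerivAt (fun x => f (x, q.2)) (pdx f q) q.1 := by
  simp only [pdx]
  exact (((sliceX_contDiff hf q.2).differentiable (by simp)) q.1).hasDerivAt

lemma pdx_const_mul {f : ℝ × ℝ → ℝ} (hf : ContDiff ℝ (⊤ : ℕ∞) f) (a : ℝ) (q : ℝ × ℝ) :
    pdx (fun q' => a * f q') q = a * pdx f q :=
  ((hasDerivAt_pdx hf q).const_mul a).deriv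

lemma pdt_const_mul {f : ℝ × ℝ → ℝ} (hf : ContDiff ℝ (⊤ : ℕ∞) f) (a : ℝ) (q : ℝ × ℝ) :
    pdt (fun q' => a * f q') q = a * pdt f q := by
  have hd : DifferentiableAt ℝ (fun t => f (q.1, t)) q.2 :=
    ((sliceT_contDiff hf q.1).differentiable (by simp)) q.2
  exact (hd.hasDerivAt.const_mul a).deriv

/-- First spatial derivative of `1/w²`. -/
lemma pdx_inv_sq {w : ℝ × ℝ → ℝ} (hw : ContDiff ℝ (⊤ : ℕ∞) w)
    (hwne : ∀ q, w q ≠ 0) (q : ℝ × ℝ) :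
    pdx (fun q' => 1 / (w q') ^ 2) q = -2 * pdx w q / w q ^ 3 := by
  have hg := hasDerivAt_pdx hw q
  have h2 : HasDerivAt (fun x => (w (x, q.2)) ^ 2)
      ((2 : ℕ) * w q ^ (2 - 1) * pdx w q) q.1 := by
    have h : HasDerivAt (fun x => (w (x, q.2)) ^ 2) _ q.1 := hg.pow 2
    simpa using h
  have hne : w (q.1, q.2) ^ 2 ≠ 0 := pow_ne_zero 2 (hwne q)
  have h3 := h2.inv hne
  have h4 : pdx (fun q' => 1 / (w q') ^ 2) q
      = deriv (fun x => ((w (x, q.2)) ^ 2)⁻¹) q.1 := by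
    simp only [pdx, one_div]
  rw [h4, show deriv (fun x => ((w (x, q.2)) ^ 2)⁻¹) q.1 = _ from h3.deriv]
  have hq : w (q.1, q.2) = w q := by simp
  rw [hq]
  field_simp [hwne q]
  ring

lemma main_calc {w : ℝ × ℝ → ℝ} (hw : ContDiff ℝ (⊤ : ℕ∞) w)
    (hwne : ∀ q, w q ≠ 0) {c : ℝ} (hc0 : c ≠ 0) (hc3 : c ^ 3 = 1 / 2) (q : ℝ × ℝ) :
    -c * pdx (pdx (fun q'' => 1 / (w q'') ^ 2)) q
      = pdx (fun q' => (-c * pdx w q') / (-c * w q') ^ 3) q := by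
  have hFx : pdx (fun q'' => 1 / (w q'') ^ 2)
      = fun q' => -2 * pdx w q' / w q' ^ 3 := funext (pdx_inv_sq hw hwne)
  rw [hFx]
  have hw1 : ContDiff ℝ (⊤ : ℕ∞) (pdx w) := contDiff_pdx hw
  have hg := hasDerivAt_pdx hw q
  have hg1 := hasDerivAt_pdx hw1 q
  have hq1 : w (q.1, q.2) = w q := by simp
  have hq2 : pdx w (q.1, q.2) = pdx w q := by simp
  -- LHS derivative
  have hnum : HasDerivAt (fun x => -2 * pdx w (x, q.2)) (-2 * pdx (pdx w) q) q.1 :=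
    hg1.const_mul (-2)
  have hden : HasDerivAt (fun x => (w (x, q.2)) ^ 3)
      ((3 : ℕ) * w (q.1, q.2) ^ (3 - 1) * pdx w q) q.1 := hg.pow 3
  have hLdiv := hnum.div hden (by rw [hq1]; exact pow_ne_zero 3 (hwne q))
  have hL : pdx (fun q' => -2 * pdx w q' / w q' ^ 3) q
      = (-2 * pdx (pdx w) q * w (q.1, q.2) ^ 3 -
          -2 * pdx w (q.1, q.2) * ((3 : ℕ) * w (q.1, q.2) ^ (3 - 1) * pdx w q)) /
        (w (q.1, q.2) ^ 3) ^ 2 := hLdiv.deriv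
  -- RHS derivative
  have hnum2 : HasDerivAt (fun x => -c * pdx w (x, q.2)) (-c * pdx (pdx w) q) q.1 :=
    hg1.const_mul (-c)
  have hdenin : HasDerivAt (fun x => -c * w (x, q.2)) (-c * pdx w q) q.1 :=
    hg.const_mul (-c)
  have hden2 : HasDerivAt (fun x => (-c * w (x, q.2)) ^ 3)
      ((3 : ℕ) * (-c * w (q.1, q.2)) ^ (3 - 1) * (-c * pdx w q)) q.1 := hdenin.pow 3
  have hRdiv := hnum2.div hden2
    (by rw [hq1]; exact pow_ne_zero 3 (mul_ne_zero (neg_ne_zero.2 hc0) (hwne q)))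
  have hR : pdx (fun q' => (-c * pdx w q') / (-c * w q') ^ 3) q
      = (-c * pdx (pdx w) q * (-c * w (q.1, q.2)) ^ 3 -
          -c * pdx w (q.1, q.2) *
            ((3 : ℕ) * (-c * w (q.1, q.2)) ^ (3 - 1) * (-c * pdx w q))) /
        ((-c * w (q.1, q.2)) ^ 3) ^ 2 := hRdiv.deriv
  rw [hL, hR, hq1, hq2]
  set a := w q
  set b := pdx w q
  set d := pdx (pdx w) q
  have ha : a ≠ 0 := hwne q
  field_simp
  linear_combination (-2 * (-c ^ 2 * d * a ^ 3 + 3 * c ^ 2 * a ^ 2 * b ^ 2)) * hc3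

/-- Potentialisation of Case 2: for a solution of `u_t = 1/u_xxx²`, the variable
`p = −2^{−1/3} u_xx` has `p_x ≠ 0` and satisfies the compatibility identity
`p_t = D_x( p_xx/p_x³ )`, i.e. the potential `v` with `v_x = p` solves
`v_t = v_xxx/v_xx³`. -/
theorem potentialisation_case2
    (u : ℝ × ℝ → ℝ) (hu : ContDiff ℝ (⊤ : ℕ∞) u)
    (huxxx : ∀ q : ℝ × ℝ, pdx (pdx (pdx u)) q ≠ 0)
    (heq : ∀ q : ℝ × ℝ, pdt u q = 1 / (pdx (pdx (pdx u)) q) ^ 2)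
    (p : ℝ × ℝ → ℝ)
    (hp : p = fun q => -(2 : ℝ) ^ (-(1 : ℝ) / 3) * pdx (pdx u) q)
    (G : ℝ × ℝ → ℝ)
    (hG : G = fun q => pdx (pdx p) q / (pdx p q) ^ 3) :
    (∀ q : ℝ × ℝ, pdx p q ≠ 0) ∧ (∀ q : ℝ × ℝ, pdt p q = pdx G q) := by
  subst hp; subst hG
  set c : ℝ := (2 : ℝ) ^ (-(1 : ℝ) / 3) with hcdef
  have hcpos : 0 < c := Real.rpow_pos_of_pos (by norm_num) _
  have hc0 : c ≠ 0 := ne_of_gt hcpos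
  have hc3 : c ^ 3 = 1 / 2 := by
    rw [hcdef, ← Real.rpow_natCast ((2:ℝ) ^ (-(1:ℝ)/3)) 3,
      ← Real.rpow_mul (by norm_num : (0:ℝ) ≤ 2)]
    norm_num
  have hu1 : ContDiff ℝ (⊤ : ℕ∞) (pdx u) := contDiff_pdx hu
  have hu2 : ContDiff ℝ (⊤ : ℕ∞) (pdx (pdx u)) := contDiff_pdx hu1
  have hw : ContDiff ℝ (⊤ : ℕ∞) (pdx (pdx (pdx u))) := contDiff_pdx hu2
  have hpx : ∀ q : ℝ × ℝ, pdx (fun q' => -c * pdx (pdx u) q') q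
      = -c * pdx (pdx (pdx u)) q := fun q => pdx_const_mul hu2 (-c) q
  constructor
  · intro q
    rw [hpx q]
    exact mul_ne_zero (neg_ne_zero.2 hc0) (huxxx q)
  · intro q
    have hpxfun : pdx (fun q' => -c * pdx (pdx u) q')
        = fun q' => -c * pdx (pdx (pdx u)) q' := funext hpx
    have hGeq : (fun q' => pdx (pdx fun q'' => -c * pdx (pdx u) q'') q' /
          pdx (fun q'' => -c * pdx (pdx u) q'') q' ^ 3)
        = fun q' => (-c * pdx (pdx (pdx (pdx u))) q') / (-c * pdx (pdx (pdx u)) q') ^ 3 := by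
      funext r
      rw [hpxfun, pdx_const_mul hw (-c) r]
    rw [hGeq]
    have hcomm1 : pdt (pdx u) = pdx (pdt u) :=
      funext fun r => (pdx_pdt_comm hu r).symm
    have hpdtu : pdt u = fun q' => 1 / (pdx (pdx (pdx u)) q') ^ 2 := funext heq
    calc pdt (fun q' => -c * pdx (pdx u) q') q
        = -c * pdt (pdx (pdx u)) q := pdt_const_mul hu2 (-c) q
      _ = -c * pdx (pdt (pdx u)) q := by rw [pdx_pdt_comm hu1 q]
      _ = -c * pdx (pdx (fun q' => 1 / (pdx (pdx (pdx u)) q') ^ 2)) q := by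
          rw [hcomm1, hpdtu]
      _ = pdx (fun q' => (-c * pdx (pdx (pdx (pdx u))) q') /
            (-c * pdx (pdx (pdx u)) q') ^ 3) q := main_calc hw huxxx hc0 hc3 q
end
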